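/- Let r₃ be the 3-dimensional complex Lie algebra with basis e₁,e₂,e₃ and nonzero brackets [e₁,e₂] = e₂, [e₁,e₃] = e₂ + e₃. If f,g : r₃ → r₃ are linear maps satisfying f([a,b]) = [f(a),b] + [a,f(b)] - [a,g(b)] for all a,b, then there exist complex numbers β₁,...,β₅ such that f(e₁) = β₁e₁ + β₂e₂ + β₃e₃, f(e₂) = β₄e₂, f(e₃) = β₅e₂ + β₄e₃, and g = β₁·id. -/

import Mathlib

/-- Description of the pairs `(f, g)` satisfying the compatibility condition on
the Lie algebra `r₃`: `[e₁,e₂] = e₂`, `[e₁,e₃] = e₂ + e₃`. -/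
theorem stmt7 {L : Type*} [LieRing L] [LieAlgebra ℂ L]
    (b : Module.Basis (Fin 3) ℂ L)
    (h12 : ⁅b 0, b 1⁆ = b 1) (h13 : ⁅b 0, b 2⁆ = b 1 + b 2)
    (h23 : ⁅b 1, b 2⁆ = 0)
    (f g : L →ₗ[ℂ] L)
    (hfg : ∀ a c : L, f ⁅a, c⁆ = ⁅f a, c⁆ + ⁅a, f c⁆ - ⁅a, g c⁆) :
    ∃ β₁ β₂ β₃ β₄ β₅ : ℂ,
      f (b 0) = β₁ • b 0 + β₂ • b 1 + β₃ • b 2 ∧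
      f (b 1) = β₄ • b 1 ∧
      f (b 2) = β₅ • b 1 + β₄ • b 2 ∧
      ∀ x : L, g x = β₁ • x := by
  have h21 : ⁅b 1, b 0⁆ = -b 1 := by rw [← lie_skew, h12]
  have h31 : ⁅b 2, b 0⁆ = -(b 1 + b 2) := by rw [← lie_skew, h13]
  have h32 : ⁅b 2, b 1⁆ = 0 := by rw [← lie_skew, h23, neg_zero]
  have hb : ∀ x : L, x = b.repr x 0 • b 0 + b.repr x 1 • b 1 + b.repr x 2 • b 2 := by
    intro x
    have := b.sum_repr x
    rw [Fin.sum_univ_three] at this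
    exact this.symm
  obtain ⟨a0, a1, a2, hf0⟩ : ∃ x y z, f (b 0) = x • b 0 + y • b 1 + z • b 2 := ⟨_, _, _, hb _⟩
  obtain ⟨p, q, r, hf1⟩ : ∃ x y z, f (b 1) = x • b 0 + y • b 1 + z • b 2 := ⟨_, _, _, hb _⟩
  obtain ⟨s, t, u, hf2⟩ : ∃ x y z, f (b 2) = x • b 0 + y • b 1 + z • b 2 := ⟨_, _, _, hb _⟩
  obtain ⟨c0, c1, c2, hg0⟩ : ∃ x y z, g (b 0) = x • b 0 + y • b 1 + z • b 2 := ⟨_, _, _, hb _⟩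
  obtain ⟨d0, d1, d2, hg1⟩ : ∃ x y z, g (b 1) = x • b 0 + y • b 1 + z • b 2 := ⟨_, _, _, hb _⟩
  obtain ⟨k0, k1, k2, hg2⟩ : ∃ x y z, g (b 2) = x • b 0 + y • b 1 + z • b 2 := ⟨_, _, _, hb _⟩
  have rep : ∀ x y : L, x = y → ∀ i, b.repr x i = b.repr y i := by
    intro x y h i; rw [h]
  have E01 := hfg (b 0) (b 1)
  have E02 := hfg (b 0) (b 2)
  have E12 := hfg (b 1) (b 2)
  have E10 := hfg (b 1) (b 0)
  have E20 := hfg (b 2) (b 0)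
  have E21 := hfg (b 2) (b 1)
  have E00 := hfg (b 0) (b 0)
  simp only [h12, h13, h23, h21, h31, h32, lie_self, map_zero, map_neg, map_add,
    hf0, hf1, hf2, hg0, hg1, hg2, add_lie, smul_lie, lie_add, lie_smul,
    smul_zero, add_zero, zero_add, smul_add, smul_neg] at E01 E02 E12 E10 E20 E21 E00
  have e010 := rep _ _ E01 0
  have e011 := rep _ _ E01 1
  have e012 := rep _ _ E01 2
  have e020 := rep _ _ E02 0
  have e021 := rep _ _ E02 1
  have e022 := rep _ _ E02 2
  have e121 := rep _ _ E12 1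
  have e100 := rep _ _ E10 0
  have e101 := rep _ _ E10 1
  have e200 := rep _ _ E20 0
  have e201 := rep _ _ E20 1
  have e202 := rep _ _ E20 2
  have e211 := rep _ _ E21 1
  have e212 := rep _ _ E21 2
  have e001 := rep _ _ E00 1
  have e002 := rep _ _ E00 2
  simp only [map_add, map_sub, map_neg, map_smul, map_zero, Finsupp.add_apply,
    Finsupp.sub_apply, Finsupp.neg_apply, Finsupp.smul_apply, Finsupp.coe_zero,
    Pi.zero_apply, Module.Basis.repr_self, Finsupp.single_apply, smul_eq_mul] at e010
  norm_num [Fin.ext_iff] at e010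
  simp only [map_add, map_sub, map_neg, map_smul, map_zero, Finsupp.add_apply,
    Finsupp.sub_apply, Finsupp.neg_apply, Finsupp.smul_apply, Finsupp.coe_zero,
    Pi.zero_apply, Module.Basis.repr_self, Finsupp.single_apply, smul_eq_mul] at e011
  norm_num [Fin.ext_iff] at e011
  simp only [map_add, map_sub, map_neg, map_smul, map_zero, Finsupp.add_apply,
    Finsupp.sub_apply, Finsupp.neg_apply, Finsupp.smul_apply, Finsupp.coe_zero,
    Pi.zero_apply, Module.Basis.repr_self, Finsupp.single_apply, smul_eq_mul] at e012
  norm_num [Fin.ext_iff] at e012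
  simp only [map_add, map_sub, map_neg, map_smul, map_zero, Finsupp.add_apply,
    Finsupp.sub_apply, Finsupp.neg_apply, Finsupp.smul_apply, Finsupp.coe_zero,
    Pi.zero_apply, Module.Basis.repr_self, Finsupp.single_apply, smul_eq_mul] at e020
  norm_num [Fin.ext_iff] at e020
  simp only [map_add, map_sub, map_neg, map_smul, map_zero, Finsupp.add_apply,
    Finsupp.sub_apply, Finsupp.neg_apply, Finsupp.smul_apply, Finsupp.coe_zero,
    Pi.zero_apply, Module.Basis.repr_self, Finsupp.single_apply, smul_eq_mul] at e021
  norm_num [Fin.ext_iff] at e021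
  simp only [map_add, map_sub, map_neg, map_smul, map_zero, Finsupp.add_apply,
    Finsupp.sub_apply, Finsupp.neg_apply, Finsupp.smul_apply, Finsupp.coe_zero,
    Pi.zero_apply, Module.Basis.repr_self, Finsupp.single_apply, smul_eq_mul] at e022
  norm_num [Fin.ext_iff] at e022
  simp only [map_add, map_sub, map_neg, map_smul, map_zero, Finsupp.add_apply,
    Finsupp.sub_apply, Finsupp.neg_apply, Finsupp.smul_apply, Finsupp.coe_zero,
    Pi.zero_apply, Module.Basis.repr_self, Finsupp.single_apply, smul_eq_mul] at e121
  norm_num [Fin.ext_iff] at e121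
  simp only [map_add, map_sub, map_neg, map_smul, map_zero, Finsupp.add_apply,
    Finsupp.sub_apply, Finsupp.neg_apply, Finsupp.smul_apply, Finsupp.coe_zero,
    Pi.zero_apply, Module.Basis.repr_self, Finsupp.single_apply, smul_eq_mul] at e100
  norm_num [Fin.ext_iff] at e100
  simp only [map_add, map_sub, map_neg, map_smul, map_zero, Finsupp.add_apply,
    Finsupp.sub_apply, Finsupp.neg_apply, Finsupp.smul_apply, Finsupp.coe_zero,
    Pi.zero_apply, Module.Basis.repr_self, Finsupp.single_apply, smul_eq_mul] at e101
  norm_num [Fin.ext_iff] at e101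
  simp only [map_add, map_sub, map_neg, map_smul, map_zero, Finsupp.add_apply,
    Finsupp.sub_apply, Finsupp.neg_apply, Finsupp.smul_apply, Finsupp.coe_zero,
    Pi.zero_apply, Module.Basis.repr_self, Finsupp.single_apply, smul_eq_mul] at e200
  norm_num [Fin.ext_iff] at e200
  simp only [map_add, map_sub, map_neg, map_smul, map_zero, Finsupp.add_apply,
    Finsupp.sub_apply, Finsupp.neg_apply, Finsupp.smul_apply, Finsupp.coe_zero,
    Pi.zero_apply, Module.Basis.repr_self, Finsupp.single_apply, smul_eq_mul] at e201
  norm_num [Fin.ext_iff] at e201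
  simp only [map_add, map_sub, map_neg, map_smul, map_zero, Finsupp.add_apply,
    Finsupp.sub_apply, Finsupp.neg_apply, Finsupp.smul_apply, Finsupp.coe_zero,
    Pi.zero_apply, Module.Basis.repr_self, Finsupp.single_apply, smul_eq_mul] at e202
  norm_num [Fin.ext_iff] at e202
  simp only [map_add, map_sub, map_neg, map_smul, map_zero, Finsupp.add_apply,
    Finsupp.sub_apply, Finsupp.neg_apply, Finsupp.smul_apply, Finsupp.coe_zero,
    Pi.zero_apply, Module.Basis.repr_self, Finsupp.single_apply, smul_eq_mul] at e211
  norm_num [Fin.ext_iff] at e211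
  simp only [map_add, map_sub, map_neg, map_smul, map_zero, Finsupp.add_apply,
    Finsupp.sub_apply, Finsupp.neg_apply, Finsupp.smul_apply, Finsupp.coe_zero,
    Pi.zero_apply, Module.Basis.repr_self, Finsupp.single_apply, smul_eq_mul] at e212
  norm_num [Fin.ext_iff] at e212
  simp only [map_add, map_sub, map_neg, map_smul, map_zero, Finsupp.add_apply,
    Finsupp.sub_apply, Finsupp.neg_apply, Finsupp.smul_apply, Finsupp.coe_zero,
    Pi.zero_apply, Module.Basis.repr_self, Finsupp.single_apply, smul_eq_mul] at e001
  norm_num [Fin.ext_iff] at e001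
  simp only [map_add, map_sub, map_neg, map_smul, map_zero, Finsupp.add_apply,
    Finsupp.sub_apply, Finsupp.neg_apply, Finsupp.smul_apply, Finsupp.coe_zero,
    Pi.zero_apply, Module.Basis.repr_self, Finsupp.single_apply, smul_eq_mul] at e002
  norm_num [Fin.ext_iff] at e002
  -- solve the linear system
  have hp : p = 0 := e010
  have hr : r = 0 := by linear_combination (e101 - e202) / 2
  have hs : s = 0 := by linear_combination e020 - e010
  have hc0 : c0 = a0 := by linear_combination hr - e101
  have hu : u = q := by linear_combination e201 + hc0
  have hc2 : c2 = 0 := e002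
  have hc1 : c1 = 0 := by linear_combination e001 - e002
  have hd2 : d2 = 0 := by linear_combination e012
  have hd1 : d1 = a0 := by linear_combination e011 - hd2 + hr
  have hd0 : d0 = 0 := by linear_combination hp - e212
  have hk0 : k0 = 0 := by linear_combination hs - hp - e121
  have hk2 : k2 = a0 := by linear_combination e022 - hr
  have hk1 : k1 = 0 := by linear_combination e021 + hu - hk2
  refine ⟨a0, a1, a2, q, t, hf0, ?_, ?_, ?_⟩
  · rw [hf1, hp, hr]; simp
  · rw [hf2, hs, hu]; simp
  · intro x
    conv_lhs => rw [hb x]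
    rw [map_add, map_add, map_smul, map_smul, map_smul, hg0, hg1, hg2,
      hc0, hc1, hc2, hd0, hd1, hd2, hk0, hk1, hk2]
    conv_rhs => rw [hb x]
    module
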